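/- Let Y_1,...,Y_n be i.i.d. random variables uniform on {1,...,K}, i.e. P(Y_i = k) = 1/K for every k, and let n_k = #{i : Y_i = k}. Then for every δ ∈ (0,1) and every real m ≥ 0: if n ≥ 4K·( m + log(K/δ) ), then P( min_k n_k ≥ m ) ≥ 1 − δ. -/

import Mathlib

open MeasureTheory ProbabilityTheory

/-- **Minimum cell count for equal probabilities.**
For i.i.d. `Y i` uniform on `{1,...,K}` with counts `n_k = #{i : Y i = k}`: for every
`δ ∈ (0,1)` and every real `m ≥ 0`, if `n ≥ 4K(m + log(K/δ))` then
`P(min_k n_k ≥ m) ≥ 1 - δ`. -/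
theorem multinomial_min_count_uniform
    {Ω : Type*} [MeasurableSpace Ω] (P : Measure Ω) [IsProbabilityMeasure P]
    (K n : ℕ) (hK : 0 < K)
    (Y : Fin n → Ω → Fin K)
    (hY_meas : ∀ i, Measurable (Y i))
    (hY_indep : iIndepFun Y P)
    (hY_law : ∀ i k, P {ω | Y i ω = k} = (K : ENNReal)⁻¹)
    (δ : ℝ) (hδ : δ ∈ Set.Ioo (0 : ℝ) 1)
    (m : ℝ) (hm0 : 0 ≤ m)
    (hsize : 4 * (K : ℝ) * (m + Real.log ((K : ℝ) / δ)) ≤ (n : ℝ)) :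
    1 - δ ≤ (P {ω | ∀ k : Fin K,
        m ≤ ((Finset.univ.filter (fun i => Y i ω = k)).card : ℝ)}).toReal := by
  classical
  obtain ⟨hδ0, hδ1⟩ := hδ
  have hKR : (0:ℝ) < K := by exact_mod_cast hK
  set p : ℝ := (K:ℝ)⁻¹ with hp
  have hp_pos : 0 < p := inv_pos.mpr hKR
  have hp_le1 : p ≤ 1 := by
    rw [hp]
    exact inv_le_one_of_one_le₀ (by exact_mod_cast hK)
  set L : ℝ := Real.log ((K:ℝ)/δ) with hL
  have hKδ : (1:ℝ) ≤ (K:ℝ)/δ := by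
    rw [le_div_iff₀ hδ0]
    calc (1:ℝ) * δ = δ := one_mul δ
    _ ≤ 1 := hδ1.le
    _ ≤ K := by exact_mod_cast hK
  have hL0 : 0 ≤ L := Real.log_nonneg hKδ
  -- indicator random variables
  set X : Fin K → Fin n → Ω → ℝ :=
    fun k i ω => if Y i ω = k then 1 else 0 with hX
  have hXmeas : ∀ k i, Measurable (X k i) := by
    intro k i
    have : X k i = (fun j : Fin K => if j = k then (1:ℝ) else 0) ∘ Y i := rfl
    rw [this]
    exact (measurable_of_countable _).comp (hY_meas i)
  set S : Fin K → Ω → ℝ := fun k => ∑ i : Fin n, X k i with hS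
  have hSmeas : ∀ k, Measurable (S k) := by
    intro k
    have h : S k = fun ω => ∑ i : Fin n, X k i ω := by
      funext ω; simp [hS]
    rw [h]
    exact Finset.measurable_sum _ (fun i _ => hXmeas k i)
  have hS_count : ∀ k ω,
      ((Finset.univ.filter (fun i => Y i ω = k)).card : ℝ) = S k ω := by
    intro k ω
    rw [hS]
    simp only [Finset.sum_apply, hX, Finset.card_filter]
    push_cast
    rfl
  have hS_nonneg : ∀ k ω, 0 ≤ S k ω := by
    intro k ω
    rw [← hS_count]
    positivity
  -- measure of indicator sets
  have hsetmeas : ∀ k i, MeasurableSet {ω | Y i ω = k} :=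
    fun k i => (hY_meas i) (measurableSet_singleton k)
  have hPset : ∀ k i, (P {ω | Y i ω = k}).toReal = p := by
    intro k i
    rw [hY_law i k, ENNReal.toReal_inv]
    simp [hp]
  -- mgf of each indicator
  have hmgf_X : ∀ k i (t : ℝ), mgf (X k i) P t = 1 + (Real.exp t - 1) * p := by
    intro k i t
    have heq : (fun ω => Real.exp (t * X k i ω)) =
        fun ω => Set.indicator {ω | Y i ω = k} (fun _ => Real.exp t - 1) ω + 1 := by
      funext ω
      by_cases h : Y i ω = k
      · simp [hX, h, Set.indicator_of_mem, Set.mem_setOf_eq]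
      · simp [hX, h, Set.indicator_of_notMem, Set.mem_setOf_eq]
    rw [mgf, heq]
    rw [integral_add ((integrable_const (Real.exp t - 1)).indicator (hsetmeas k i))
      (integrable_const 1)]
    rw [integral_indicator_const _ (hsetmeas k i)]
    simp only [integral_const, measureReal_def, measure_univ, ENNReal.toReal_one, one_smul, smul_eq_mul,
      hPset k i]
    ring
  -- integrability of exp(t * S k) for t ≤ 0
  have hint : ∀ k (t : ℝ), t ≤ 0 → Integrable (fun ω => Real.exp (t * S k ω)) P := by
    intro k t ht
    refine Integrable.mono' (integrable_const 1)
      (((hSmeas k).const_mul t).exp.aestronglyMeasurable) (ae_of_all _ fun ω => ?_)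
    rw [Real.norm_eq_abs, abs_of_pos (Real.exp_pos _)]
    rw [Real.exp_le_one_iff]
    exact mul_nonpos_of_nonpos_of_nonneg ht (hS_nonneg k ω)
  -- independence of indicators (for fixed k)
  have hXindep : ∀ k, iIndepFun (X k) P := by
    intro k
    exact hY_indep.comp (fun _ j => if j = k then (1:ℝ) else 0)
      (fun _ => measurable_of_countable _)
  -- Chernoff bound for each cell
  have key : ∀ k, (P {ω | S k ω ≤ m}).toReal ≤ δ / K := by
    intro k
    have hchernoff := measure_le_le_exp_mul_mgf (μ := P) (X := S k) m
      (by norm_num : (-1:ℝ) ≤ 0) (hint k (-1) (by norm_num))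
    have hmgfS : mgf (S k) P (-1) = (1 + (Real.exp (-1) - 1) * p) ^ n := by
      rw [hS, (hXindep k).mgf_sum (fun i => hXmeas k i)]
      simp [hmgf_X]
    set q : ℝ := 1 + (Real.exp (-1) - 1) * p with hq
    have hq_le : q ≤ Real.exp (-(1 - Real.exp (-1)) * p) := by
      have := Real.add_one_le_exp (-(1 - Real.exp (-1)) * p)
      calc q = (-(1 - Real.exp (-1)) * p) + 1 := by ring
      _ ≤ _ := this
    have hq_nonneg : 0 ≤ q := by
      have h1 : Real.exp (-1) > 0 := Real.exp_pos _
      nlinarith [hp_le1, hp_pos.le]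
    have hqn : q ^ n ≤ Real.exp (-(1 - Real.exp (-1)) * p * n) := by
      calc q ^ n ≤ (Real.exp (-(1 - Real.exp (-1)) * p)) ^ n :=
            pow_le_pow_left₀ hq_nonneg hq_le n
      _ = Real.exp (-(1 - Real.exp (-1)) * p * n) := by
            rw [← Real.exp_nat_mul]; ring_nf
    have hc : (1:ℝ)/2 ≤ 1 - Real.exp (-1) := by
      have h2 : (2:ℝ) ≤ Real.exp 1 := by
        have := Real.add_one_le_exp (1:ℝ)
        linarith
      have : Real.exp (-1) ≤ 1/2 := by
        rw [Real.exp_neg]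
        rw [inv_le_comm₀ (Real.exp_pos 1) (by norm_num)]
        linarith
      linarith
    -- n * p ≥ 4 (m + L)
    have hnp : 4 * (m + L) ≤ (n:ℝ) * p := by
      have h := mul_le_mul_of_nonneg_right hsize (inv_nonneg.mpr hKR.le)
      calc 4 * (m + L) = 4 * (K:ℝ) * (m + L) * (K:ℝ)⁻¹ := by
            field_simp
      _ ≤ (n:ℝ) * (K:ℝ)⁻¹ := h
      _ = (n:ℝ) * p := by rw [hp]
    have hexp_bound : m + (-(1 - Real.exp (-1)) * p * n) ≤ -L := by
      have h1 : 2 * (m + L) ≤ (1 - Real.exp (-1)) * (p * n) := by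
        have hmL : 0 ≤ m + L := by linarith
        nlinarith
      nlinarith
    calc (P {ω | S k ω ≤ m}).toReal
        ≤ Real.exp (-(-1) * m) * mgf (S k) P (-1) := hchernoff
      _ = Real.exp m * q ^ n := by rw [hmgfS]; norm_num
      _ ≤ Real.exp m * Real.exp (-(1 - Real.exp (-1)) * p * n) := by
          have := Real.exp_pos m
          exact mul_le_mul_of_nonneg_left hqn this.le
      _ = Real.exp (m + (-(1 - Real.exp (-1)) * p * n)) := by rw [← Real.exp_add]
      _ ≤ Real.exp (-L) := Real.exp_le_exp.mpr hexp_bound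
      _ = δ / K := by
          rw [hL, ← Real.log_inv, Real.exp_log (by positivity)]
          field_simp
  -- rewrite target set
  set A : Set Ω := ⋂ k : Fin K, {ω | m ≤ S k ω} with hA
  have hAset : {ω | ∀ k : Fin K,
      m ≤ ((Finset.univ.filter (fun i => Y i ω = k)).card : ℝ)} = A := by
    ext ω
    simp only [hA, Set.mem_setOf_eq, Set.mem_iInter]
    constructor
    · intro h k; rw [← hS_count]; exact h k
    · intro h k; rw [hS_count]; exact h k
  have hAmeas : MeasurableSet A :=
    MeasurableSet.iInter fun k => measurableSet_le measurable_const (hSmeas k)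
  -- union bound on the complement
  have hcompl : P Aᶜ ≤ ENNReal.ofReal δ := by
    have hsub : Aᶜ ⊆ ⋃ k : Fin K, {ω | S k ω ≤ m} := by
      intro ω hω
      rw [hA, Set.compl_iInter] at hω
      obtain ⟨s, ⟨k, rfl⟩, hωs⟩ := hω
      simp only [Set.mem_compl_iff, Set.mem_setOf_eq, not_le] at hωs
      exact Set.mem_iUnion.mpr ⟨k, hωs.le⟩
    calc P Aᶜ ≤ P (⋃ k : Fin K, {ω | S k ω ≤ m}) := measure_mono hsub
      _ ≤ ∑ k : Fin K, P {ω | S k ω ≤ m} := measure_iUnion_fintype_le _ _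
      _ ≤ ∑ _k : Fin K, ENNReal.ofReal (δ / K) := by
          refine Finset.sum_le_sum fun k _ => ?_
          rw [ENNReal.le_ofReal_iff_toReal_le (measure_ne_top P _) (by positivity)]
          exact key k
      _ = (K : ENNReal) * ENNReal.ofReal (δ / K) := by
          rw [Finset.sum_const, Finset.card_univ, Fintype.card_fin, nsmul_eq_mul]
      _ = ENNReal.ofReal δ := by
          rw [← ENNReal.ofReal_natCast K, ← ENNReal.ofReal_mul (by positivity)]
          congr 1
          field_simp
  have hPA : P Aᶜ = 1 - P A := prob_compl_eq_one_sub hAmeas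
  have hcomplR : (P Aᶜ).toReal ≤ δ :=
    ENNReal.toReal_le_of_le_ofReal hδ0.le hcompl
  have htR : (P Aᶜ).toReal = 1 - (P A).toReal := by
    rw [hPA, ENNReal.toReal_sub_of_le prob_le_one ENNReal.one_ne_top, ENNReal.toReal_one]
  rw [hAset]
  linarith [htR ▸ hcomplR]
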